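/- Let μ be a distribution on binom([n],k), and suppose the 1 ↔ k up-down walk P = U_{1→k}D_{k→1} satisfies λ₂(P) ≤ C'/k for some C' < k. Then for every function f : binom([n],k) → R, Var_μ(f) ≤ (1/(1 − C'/k)) · E_{i ∼ μD_{k→1}}[Var_μ(f | i ∈ S)]. -/

import Mathlib

open Finset BigOperators

noncomputable section

def kSets (n k : ℕ) : Finset (Finset (Fin n)) := Finset.univ.powersetCard k

def margin {n : ℕ} (μ : Finset (Fin n) → ℝ) (k : ℕ) (i : Fin n) : ℝ :=
  ∑ S ∈ kSets n k, if i ∈ S then μ S else 0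

def downMass {n : ℕ} (μ : Finset (Fin n) → ℝ) (k : ℕ) (T : Finset (Fin n)) : ℝ :=
  ∑ S ∈ kSets n k, if T ⊆ S then μ S else 0

/-- Conditional expectation `E_μ[f(S) | T ⊆ S]`. -/
def condExp {n : ℕ} (μ : Finset (Fin n) → ℝ) (k : ℕ) (T : Finset (Fin n))
    (f : Finset (Fin n) → ℝ) : ℝ :=
  (∑ S ∈ kSets n k, if T ⊆ S then μ S * f S else 0) / downMass μ k T

/-- Conditional variance `Var_μ(f(S) | T ⊆ S)`. -/
def condVar {n : ℕ} (μ : Finset (Fin n) → ℝ) (k : ℕ) (T : Finset (Fin n))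
    (f : Finset (Fin n) → ℝ) : ℝ :=
  condExp μ k T (fun S => (f S) ^ 2) - (condExp μ k T f) ^ 2

/-- Transition matrix of the `1 ↔ k` up-down walk `P = U_{1→k} D_{k→1}`. -/
def upDown {n : ℕ} (μ : Finset (Fin n) → ℝ) (k : ℕ) : Matrix (Fin n) (Fin n) ℝ :=
  fun i j => ∑ S ∈ kSets n k,
    (if i ∈ S then μ S / margin μ k i else 0) * (if j ∈ S then 1 / (k : ℝ) else 0)

/-- The stationary distribution `μ D_{k→1}`. -/
def statDist {n : ℕ} (μ : Finset (Fin n) → ℝ) (k : ℕ) (i : Fin n) : ℝ :=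
  margin μ k i / k

def distMean {n : ℕ} (μ : Finset (Fin n) → ℝ) (k : ℕ) (f : Finset (Fin n) → ℝ) : ℝ :=
  ∑ S ∈ kSets n k, μ S * f S

def distVar {n : ℕ} (μ : Finset (Fin n) → ℝ) (k : ℕ) (f : Finset (Fin n) → ℝ) : ℝ :=
  distMean μ k (fun S => (f S - distMean μ k f) ^ 2)

-- ## Auxiliary lemmas

lemma count_lemma {n k : ℕ} (h : Finset (Fin n) → ℝ) :
    ∑ i : Fin n, ∑ S ∈ kSets n k, (if i ∈ S then h S else 0)
      = (k : ℝ) * ∑ S ∈ kSets n k, h S := by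
  rw [Finset.sum_comm, Finset.mul_sum]
  refine Finset.sum_congr rfl fun S hS => ?_
  rw [Finset.sum_ite_mem, Finset.univ_inter, Finset.sum_const]
  have hc : S.card = k := (Finset.mem_powersetCard_univ).1 hS
  simp [hc, nsmul_eq_mul]

lemma margin_eq_zero {n k : ℕ} {μ : Finset (Fin n) → ℝ} (hnonneg : ∀ S, 0 ≤ μ S)
    {i : Fin n} (h : margin μ k i = 0) {S : Finset (Fin n)} (hS : S ∈ kSets n k)
    (hiS : i ∈ S) : μ S = 0 := by
  have h1 : ∀ T ∈ kSets n k, 0 ≤ (if i ∈ T then μ T else 0) := by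
    intro T _; split <;> simp [hnonneg T]
  have := (Finset.sum_eq_zero_iff_of_nonneg h1).1 h S hS
  simpa [hiS] using this

lemma A_eq_zero {n k : ℕ} {μ : Finset (Fin n) → ℝ} (hnonneg : ∀ S, 0 ≤ μ S)
    {i : Fin n} (h : margin μ k i = 0) (x : Finset (Fin n) → ℝ) :
    ∑ S ∈ kSets n k, (if i ∈ S then μ S * x S else 0) = 0 := by
  refine Finset.sum_eq_zero fun S hS => ?_
  by_cases hi : i ∈ S
  · simp [hi, margin_eq_zero hnonneg h hS hi]
  · simp [hi]

lemma stat_mul_div {n k : ℕ} {μ : Finset (Fin n) → ℝ} (hnonneg : ∀ S, 0 ≤ μ S)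
    {i : Fin n} {S : Finset (Fin n)} (hS : S ∈ kSets n k) (hiS : i ∈ S) :
    statDist μ k i * (μ S / margin μ k i) = μ S / k := by
  by_cases h : margin μ k i = 0
  · simp [statDist, h, margin_eq_zero hnonneg h hS hiS]
  · unfold statDist
    rw [div_mul_div_comm, mul_comm ((k:ℝ)) (margin μ k i), mul_div_mul_left _ _ h]

/-- The Rayleigh quotient of the up-down walk as a sum of squares. -/
lemma quad {n k : ℕ} {μ : Finset (Fin n) → ℝ} (hnonneg : ∀ S, 0 ≤ μ S) (w : Fin n → ℝ) :
    ∑ i, statDist μ k i * w i * ((upDown μ k).mulVec w i)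
      = ∑ S ∈ kSets n k, μ S / (k : ℝ) ^ 2 * (∑ j ∈ S, w j) ^ 2 := by
  have h1 : ∀ i, (upDown μ k).mulVec w i
      = ∑ S ∈ kSets n k, (if i ∈ S then μ S / margin μ k i else 0)
          * ((1 / (k : ℝ)) * ∑ j ∈ S, w j) := by
    intro i
    simp only [Matrix.mulVec, dotProduct, upDown, Finset.sum_mul]
    rw [Finset.sum_comm]
    refine Finset.sum_congr rfl fun S hS => ?_
    rw [show ∀ a : ℝ, ∀ b c : Fin n → ℝ, (∑ j, (a * b j) * c j) = a * ∑ j, b j * c j from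
      fun a b c => by rw [Finset.mul_sum]; exact Finset.sum_congr rfl fun j _ => by ring]
    congr 1
    rw [show (∑ j, (if j ∈ S then 1 / (k:ℝ) else 0) * w j)
        = ∑ j, (if j ∈ S then (1/(k:ℝ)) * w j else 0) from
      Finset.sum_congr rfl fun j _ => by split <;> simp]
    rw [Finset.sum_ite_mem, Finset.univ_inter, Finset.mul_sum]
  calc ∑ i, statDist μ k i * w i * ((upDown μ k).mulVec w i)
      = ∑ i, ∑ S ∈ kSets n k,
          (if i ∈ S then μ S / (k:ℝ)^2 * (∑ j ∈ S, w j) * w i else 0) := by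
        refine Finset.sum_congr rfl fun i _ => ?_
        rw [h1, Finset.mul_sum]
        refine Finset.sum_congr rfl fun S hS => ?_
        by_cases hiS : i ∈ S
        · simp only [if_pos hiS]
          have hk := stat_mul_div hnonneg hS hiS (μ := μ) (i := i)
          have : statDist μ k i * w i * (μ S / margin μ k i * (1 / (k:ℝ) * ∑ j ∈ S, w j))
              = (statDist μ k i * (μ S / margin μ k i)) * (w i * (1 / (k:ℝ) * ∑ j ∈ S, w j)) := by
            ring
          rw [this, hk]
          ring
        · simp [hiS]
    _ = ∑ S ∈ kSets n k, ∑ i, (if i ∈ S then μ S / (k:ℝ)^2 * (∑ j ∈ S, w j) * w i else 0) :=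
        Finset.sum_comm
    _ = ∑ S ∈ kSets n k, μ S / (k : ℝ) ^ 2 * (∑ j ∈ S, w j) ^ 2 := by
        refine Finset.sum_congr rfl fun S hS => ?_
        rw [Finset.sum_ite_mem, Finset.univ_inter, ← Finset.mul_sum]
        ring

set_option maxHeartbeats 2000000 in
theorem variance_local_to_global
    (n k : ℕ) (μ : Finset (Fin n) → ℝ) (C' : ℝ)
    (hk : 1 ≤ k) (hC' : C' < (k : ℝ))
    (hnonneg : ∀ S, 0 ≤ μ S)
    (hsum : ∑ S ∈ kSets n k, μ S = 1)
    (hlambda2 : ∀ v : Fin n → ℝ, (∑ i, statDist μ k i * v i) = 0 →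
      ∑ i, statDist μ k i * v i * ((upDown μ k).mulVec v i) ≤
        (C' / k) * ∑ i, statDist μ k i * (v i) ^ 2) :
    ∀ f : Finset (Fin n) → ℝ,
      distVar μ k f ≤ (1 / (1 - C' / k)) * ∑ i, statDist μ k i * condVar μ k {i} f := by
  intro f
  have hkR : (0:ℝ) < k := by exact_mod_cast hk
  have hkne : (k:ℝ) ≠ 0 := ne_of_gt hkR
  set M := distMean μ k f with hM
  set A : Fin n → ℝ := fun i => ∑ S ∈ kSets n k, if i ∈ S then μ S * f S else 0 with hA
  set Bq : Fin n → ℝ := fun i => ∑ S ∈ kSets n k, if i ∈ S then μ S * f S ^ 2 else 0 with hB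
  set g : Fin n → ℝ := fun i => A i / margin μ k i with hg
  set v : Fin n → ℝ := fun i => g i - M with hv
  set W := ∑ i, statDist μ k i * v i ^ 2 with hW
  set V := distVar μ k f with hV
  -- basic positivity
  have hmnn : ∀ i, 0 ≤ margin μ k i := fun i =>
    Finset.sum_nonneg fun S _ => by split <;> simp [hnonneg S]
  have hπnn : ∀ i, 0 ≤ statDist μ k i := fun i => div_nonneg (hmnn i) hkR.le
  have hmsum : ∑ i, margin μ k i = (k:ℝ) := by
    unfold margin; rw [count_lemma, hsum, mul_one]
  have hπ1 : ∑ i, statDist μ k i = 1 := by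
    unfold statDist; rw [← Finset.sum_div, hmsum, div_self hkne]
  -- A and g
  have hAg : ∀ i, statDist μ k i * g i = A i / k := by
    intro i
    by_cases h : margin μ k i = 0
    · have hA0 : A i = 0 := A_eq_zero hnonneg h f
      simp [hg, statDist, h, hA0]
    · simp only [hg, statDist]
      rw [div_mul_div_comm, mul_comm ((k:ℝ)) (margin μ k i), mul_div_mul_left _ _ h]
  have hBg : ∀ i, statDist μ k i * (Bq i / margin μ k i) = Bq i / k := by
    intro i
    by_cases h : margin μ k i = 0
    · have hB0 : Bq i = 0 := A_eq_zero hnonneg h (fun S => f S ^ 2)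
      simp [statDist, h, hB0]
    · simp only [statDist]
      rw [div_mul_div_comm, mul_comm ((k:ℝ)) (margin μ k i), mul_div_mul_left _ _ h]
  have hAsum : ∑ i, A i = (k:ℝ) * M := by
    simp only [hA]; rw [count_lemma]; rfl
  have hBsum : ∑ i, Bq i = (k:ℝ) * ∑ S ∈ kSets n k, μ S * f S ^ 2 := by
    simp only [hB]; rw [count_lemma]
  have hgsum : ∑ i, statDist μ k i * g i = M := by
    rw [Finset.sum_congr rfl fun i _ => hAg i, ← Finset.sum_div, hAsum,
      mul_div_cancel_left₀ _ hkne]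
  have hcent : ∑ i, statDist μ k i * v i = 0 := by
    simp only [hv, mul_sub]
    rw [Finset.sum_sub_distrib, hgsum, ← Finset.sum_mul, hπ1, one_mul, sub_self]
  -- V and W in terms of second moments
  have hVexp : V = ∑ S ∈ kSets n k, μ S * (f S - M) ^ 2 := rfl
  clear_value M A Bq g v W V
  have hVe : V = (∑ S ∈ kSets n k, μ S * f S ^ 2) - M ^ 2 := by
    rw [hVexp]
    rw [Finset.sum_congr rfl (fun S _ => show μ S * (f S - M) ^ 2
      = μ S * f S ^ 2 - 2 * M * (μ S * f S) + M ^ 2 * μ S from by ring)]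
    rw [Finset.sum_add_distrib, Finset.sum_sub_distrib, ← Finset.mul_sum, ← Finset.mul_sum,
      hsum, mul_one]
    have hMs : ∑ S ∈ kSets n k, μ S * f S = M := by rw [hM]; rfl
    rw [hMs]; ring
  have hWe : W = (∑ i, statDist μ k i * g i ^ 2) - M ^ 2 := by
    rw [hW]
    rw [Finset.sum_congr rfl (fun i _ => show statDist μ k i * v i ^ 2
      = statDist μ k i * g i ^ 2 - 2 * M * (statDist μ k i * g i) + M ^ 2 * statDist μ k i from by
        simp only [hv]; ring)]
    rw [Finset.sum_add_distrib, Finset.sum_sub_distrib, ← Finset.mul_sum, ← Finset.mul_sum,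
      hπ1, mul_one, hgsum]
    ring
  -- conditional variance sum
  have hcondVar : ∀ i, statDist μ k i * condVar μ k {i} f
      = Bq i / k - statDist μ k i * g i ^ 2 := by
    intro i
    have hdm : downMass μ k {i} = margin μ k i := by
      unfold downMass margin
      exact Finset.sum_congr rfl fun S _ => by simp [Finset.singleton_subset_iff]
    have hce : condExp μ k {i} f = g i := by
      unfold condExp; rw [hdm]
      simp only [hg, hA, Finset.singleton_subset_iff]
    have hce2 : condExp μ k {i} (fun S => f S ^ 2) = Bq i / margin μ k i := by
      unfold condExp; rw [hdm]
      simp only [hB, Finset.singleton_subset_iff]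
    unfold condVar
    rw [hce, hce2, mul_sub, hBg i]
  have hVW : ∑ i, statDist μ k i * condVar μ k {i} f = V - W := by
    rw [Finset.sum_congr rfl fun i _ => hcondVar i, Finset.sum_sub_distrib, ← Finset.sum_div,
      hBsum, mul_div_cancel_left₀ _ hkne]
    rw [hVe, hWe]; ring
  -- the Rayleigh quotient
  set Q := ∑ S ∈ kSets n k, μ S / (k:ℝ)^2 * (∑ j ∈ S, v j)^2 with hQ
  clear_value Q
  have hQnn : 0 ≤ Q := by
    rw [hQ]
    exact Finset.sum_nonneg fun S _ =>
      mul_nonneg (div_nonneg (hnonneg S) (sq_nonneg _)) (sq_nonneg _)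
  have hQle : Q ≤ (C'/k) * W := by
    have h := hlambda2 v hcent
    rwa [quad hnonneg v, ← hQ, ← hW] at h
  -- W as an inner product  (W = ⟨f̄, Uv⟩_μ)
  have hAj : ∀ j, (∑ S ∈ kSets n k, if j ∈ S then μ S * (f S - M) else 0)
      = A j - M * margin μ k j := by
    intro j
    rw [Finset.sum_congr rfl (fun S _ => show (if j ∈ S then μ S * (f S - M) else 0)
      = (if j ∈ S then μ S * f S else 0) - M * (if j ∈ S then μ S else 0) from by
        split <;> ring)]
    rw [Finset.sum_sub_distrib, ← Finset.mul_sum]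
    simp only [hA, margin]
  have hAj2 : ∀ j, A j = margin μ k j * g j := by
    intro j
    by_cases h : margin μ k j = 0
    · rw [h, zero_mul]; simp only [hA]; exact A_eq_zero hnonneg h f
    · simp only [hg]; rw [mul_div_cancel₀ _ h]
  have hTW : (∑ S ∈ kSets n k, (μ S * (f S - M)) * ((1/(k:ℝ)) * ∑ j ∈ S, v j)) = W := by
    calc ∑ S ∈ kSets n k, (μ S * (f S - M)) * ((1/(k:ℝ)) * ∑ j ∈ S, v j)
        = ∑ S ∈ kSets n k, ∑ j, (if j ∈ S then (μ S * (f S - M)) * ((1/(k:ℝ)) * v j) else 0) := by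
          refine Finset.sum_congr rfl fun S _ => ?_
          rw [Finset.sum_ite_mem, Finset.univ_inter, ← mul_assoc, Finset.mul_sum]
          rw [mul_assoc]
          exact Finset.sum_congr rfl fun j _ => by ring
      _ = ∑ j, ∑ S ∈ kSets n k, (if j ∈ S then (μ S * (f S - M)) * ((1/(k:ℝ)) * v j) else 0) :=
          Finset.sum_comm
      _ = ∑ j, (A j - M * margin μ k j) * ((1/(k:ℝ)) * v j) := by
          refine Finset.sum_congr rfl fun j _ => ?_
          rw [show (∑ S ∈ kSets n k, if j ∈ S then (μ S * (f S - M)) * ((1/(k:ℝ)) * v j) else 0)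
              = (∑ S ∈ kSets n k, if j ∈ S then μ S * (f S - M) else 0) * ((1/(k:ℝ)) * v j) from by
            rw [Finset.sum_mul]
            exact Finset.sum_congr rfl fun S _ => by split <;> simp]
          rw [hAj j]
      _ = W := by
          rw [hW]
          refine Finset.sum_congr rfl fun j _ => ?_
          rw [hAj2 j]
          simp only [hv, statDist]
          field_simp
  -- Cauchy–Schwarz : W² ≤ V * Q
  have hCS : W^2 ≤ V * Q := by
    have h := Finset.sum_mul_sq_le_sq_mul_sq (kSets n k)
      (fun S => Real.sqrt (μ S) * (f S - M))
      (fun S => Real.sqrt (μ S) * ((1/(k:ℝ)) * ∑ j ∈ S, v j))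
    have e1 : (∑ S ∈ kSets n k, (Real.sqrt (μ S) * (f S - M))
        * (Real.sqrt (μ S) * ((1/(k:ℝ)) * ∑ j ∈ S, v j))) = W := by
      rw [← hTW]
      refine Finset.sum_congr rfl fun S _ => ?_
      rw [show (Real.sqrt (μ S) * (f S - M)) * (Real.sqrt (μ S) * ((1/(k:ℝ)) * ∑ j ∈ S, v j))
          = (Real.sqrt (μ S) * Real.sqrt (μ S)) * ((f S - M) * ((1/(k:ℝ)) * ∑ j ∈ S, v j)) from by
        ring]
      rw [Real.mul_self_sqrt (hnonneg S)]
      ring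
    have e2 : (∑ S ∈ kSets n k, (Real.sqrt (μ S) * (f S - M))^2) = V := by
      rw [hVexp]
      refine Finset.sum_congr rfl fun S _ => ?_
      rw [mul_pow, Real.sq_sqrt (hnonneg S)]
    have e3 : (∑ S ∈ kSets n k, (Real.sqrt (μ S) * ((1/(k:ℝ)) * ∑ j ∈ S, v j))^2) = Q := by
      rw [hQ]
      refine Finset.sum_congr rfl fun S _ => ?_
      rw [mul_pow, Real.sq_sqrt (hnonneg S), mul_pow]
      ring
    rw [e1, e2, e3] at h
    exact h
  have hVnn : 0 ≤ V := by
    rw [hVexp]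
    exact Finset.sum_nonneg fun S _ => mul_nonneg (hnonneg S) (sq_nonneg _)
  have hWnn : 0 ≤ W := by
    rw [hW]
    exact Finset.sum_nonneg fun i _ => mul_nonneg (hπnn i) (sq_nonneg _)
  -- the key inequality  W ≤ (C'/k) V
  have hkey : W ≤ (C'/k) * V := by
    by_cases hC0 : 0 ≤ C'
    · rcases eq_or_lt_of_le hWnn with h0 | hpos
      · rw [← h0]
        exact mul_nonneg (div_nonneg hC0 hkR.le) hVnn
      · nlinarith [mul_le_mul_of_nonneg_left hQle hVnn, hCS, hpos]
    · push_neg at hC0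
      have hCk : C'/k < 0 := div_neg_of_neg_of_pos hC0 hkR
      have hW0 : W = 0 := by nlinarith [hQnn, hQle, hWnn, hCk]
      -- δ-test : every point has stationary mass 0 or 1
      have hm1 : ∀ j, margin μ k j ≤ 1 := by
        intro j
        calc margin μ k j ≤ ∑ S ∈ kSets n k, μ S :=
              Finset.sum_le_sum fun S _ => by split <;> simp [hnonneg S]
          _ = 1 := hsum
      have hπle1 : ∀ j, statDist μ k j ≤ 1 := by
        intro j
        unfold statDist
        rw [div_le_one hkR]
        calc margin μ k j ≤ 1 := hm1 j
          _ ≤ (k:ℝ) := by exact_mod_cast hk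
      have hdelta : ∀ j, statDist μ k j = 0 ∨ statDist μ k j = 1 := by
        intro j
        set c := statDist μ k j with hc
        set u : Fin n → ℝ := fun i => (if i = j then 1 else 0) - c with hu
        clear_value c u
        have hcu : ∑ i, statDist μ k i * u i = 0 := by
          simp only [hu, mul_sub]
          rw [Finset.sum_sub_distrib, ← Finset.sum_mul, hπ1, one_mul]
          rw [show (∑ i, statDist μ k i * (if i = j then (1:ℝ) else 0)) = c from by
            rw [Finset.sum_congr rfl (fun i _ => show statDist μ k i * (if i = j then (1:ℝ) else 0)
              = (if i = j then statDist μ k i else 0) from by split <;> simp)]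
            rw [Finset.sum_ite_eq' Finset.univ j (statDist μ k)]
            simp [hc]]
          exact sub_self c
        have hsq : ∑ i, statDist μ k i * u i ^ 2 = c * (1 - c) := by
          rw [Finset.sum_congr rfl (fun i _ => show statDist μ k i * u i ^ 2
            = statDist μ k i * c^2
              + (if i = j then statDist μ k i * ((1-c)^2 - c^2) else 0) from by
            by_cases h : i = j
            · simp only [hu, h, if_pos]; ring
            · simp only [hu, h, if_neg, if_false]; ring)]
          rw [Finset.sum_add_distrib, ← Finset.sum_mul, hπ1, one_mul,
            Finset.sum_ite_eq' Finset.univ j (fun i => statDist μ k i * ((1-c)^2 - c^2))]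
          simp only [Finset.mem_univ, if_true, ← hc]
          ring
        have hql := hlambda2 u hcu
        rw [quad hnonneg u, hsq] at hql
        have hQu : 0 ≤ ∑ S ∈ kSets n k, μ S / (k:ℝ)^2 * (∑ j' ∈ S, u j')^2 :=
          Finset.sum_nonneg fun S _ =>
            mul_nonneg (div_nonneg (hnonneg S) (sq_nonneg _)) (sq_nonneg _)
        have h1 : c * (1 - c) ≤ 0 := by nlinarith [hql, hQu, hCk]
        have h2 : 0 ≤ c * (1-c) := mul_nonneg (by rw [hc]; exact hπnn j)
          (by rw [hc]; linarith [hπle1 j])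
        rcases mul_eq_zero.1 (le_antisymm h1 h2) with h | h
        · left; exact h
        · right; linarith
      -- a point of stationary mass one exists
      have hex : ∃ j, statDist μ k j = 1 := by
        by_contra hne
        push_neg at hne
        have hall : ∀ j, statDist μ k j = 0 := fun j => (hdelta j).resolve_right (hne j)
        rw [Finset.sum_congr rfl (fun i _ => hall i), Finset.sum_const_zero] at hπ1
        norm_num at hπ1
      obtain ⟨j0, hj0⟩ := hex
      have hmj0 : margin μ k j0 = (k:ℝ) := by
        unfold statDist at hj0
        field_simp at hj0
        linarith
      have hk1 : k = 1 := by
        have hkk : (k:ℝ) ≤ 1 := by rw [← hmj0]; exact hm1 j0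
        have : k ≤ 1 := by exact_mod_cast hkk
        omega
      -- everything is concentrated: f S = M whenever μ S ≠ 0
      have hpoint : ∀ S ∈ kSets n k, μ S ≠ 0 → f S = M := by
        intro S hS hμ
        have hcard : S.card = 1 := by
          rw [← hk1]; exact Finset.mem_powersetCard_univ.1 hS
        obtain ⟨j, hj⟩ := Finset.card_eq_one.1 hcard
        have hjS : j ∈ S := by rw [hj]; exact Finset.mem_singleton_self j
        have hmj : μ S ≤ margin μ k j := by
          have := Finset.single_le_sum (f := fun T => if j ∈ T then μ T else 0)
            (fun T _ => by by_cases h : j ∈ T <;> simp [h, hnonneg T]) hS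
          simpa [hjS, margin] using this
        have hmjpos : 0 < margin μ k j :=
          lt_of_lt_of_le (lt_of_le_of_ne (hnonneg S) (Ne.symm hμ)) hmj
        have hπj : statDist μ k j = 1 := by
          rcases hdelta j with h | h
          · exfalso
            unfold statDist at h
            rcases div_eq_zero_iff.1 h with h' | h'
            · linarith
            · exact hkne h'
          · exact h
        have hmj1 : margin μ k j = (k:ℝ) := by
          unfold statDist at hπj
          field_simp at hπj
          linarith
        have hmarg : margin μ k j = μ S := by
          unfold margin
          rw [Finset.sum_congr rfl (fun T hT => show (if j ∈ T then μ T else 0)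
              = (if T = S then μ T else 0) from by
            have hTcard : T.card = 1 := by
              rw [← hk1]; exact Finset.mem_powersetCard_univ.1 hT
            obtain ⟨t, ht⟩ := Finset.card_eq_one.1 hTcard
            by_cases h : j ∈ T
            · have hjt : j = t := by rw [ht] at h; exact Finset.mem_singleton.1 h
              have hTS : T = S := by rw [ht, hj, ← hjt]
              rw [if_pos h, if_pos hTS]
            · rw [if_neg h, if_neg]
              intro heq
              exact h (heq ▸ hjS))]
          rw [Finset.sum_ite_eq' (kSets n k) S μ, if_pos hS]
        have hμ1 : μ S = 1 := by
          rw [← hmarg, hmj1, hk1, Nat.cast_one]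
        have hrest : ∀ T ∈ kSets n k, T ≠ S → μ T = 0 := by
          intro T hT hne
          have hsplit := Finset.add_sum_erase (kSets n k) μ hS
          have hz : ∑ T' ∈ (kSets n k).erase S, μ T' = 0 := by
            rw [hsum] at hsplit
            linarith
          exact (Finset.sum_eq_zero_iff_of_nonneg (fun T' _ => hnonneg T')).1 hz T
            (Finset.mem_erase.2 ⟨hne, hT⟩)
        have hMS : M = f S := by
          rw [hM]
          unfold distMean
          rw [Finset.sum_eq_single_of_mem S hS (fun T hT hne => by rw [hrest T hT hne]; ring)]
          rw [hμ1, one_mul]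
        exact hMS.symm
      have hV0 : V = 0 := by
        rw [hVexp]
        refine Finset.sum_eq_zero fun S hS => ?_
        by_cases h : μ S = 0
        · rw [h]; ring
        · rw [hpoint S hS h, sub_self]; ring
      rw [hW0, hV0, mul_zero]
  -- assemble
  have hc1 : (0:ℝ) < 1 - C'/k := by
    have : C'/k < 1 := (div_lt_one hkR).2 hC'
    linarith
  rw [hVW, div_mul_eq_mul_div, one_mul, le_div_iff₀ hc1]
  nlinarith [hkey]

end
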